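/- Identification of the Total Effect: suppose S : Ω → {0,1} is a measurable spillover-region indicator satisfying locality (S(ω) = 0 implies h(ω) = 0), with P(D=0, S=0) > 0. If No Anticipation and Cell Parallel Trends hold, then E[Y_1^obs − Y_0^obs | D=1] − E[Y_1^obs − Y_0^obs | D=0, S=0] = τ_total. -/

import Mathlib

open MeasureTheory

/-- Conditional mean of `X` given the event `A`: `E[X | A] = (1/P(A)) ∫_A X dP`. -/
noncomputable def condMean {Ω : Type*} [MeasurableSpace Ω] (P : Measure Ω)
    (A : Set Ω) (X : Ω → ℝ) : ℝ :=
  (P A).toReal⁻¹ * ∫ ω in A, X ω ∂P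

/-- Set integrals agree for `P`-integrable functions that agree pointwise on the
(possibly non-measurable) set `s`. -/
lemma setIntegral_congr_on' {Ω : Type*} [MeasurableSpace Ω] {P : Measure Ω} [IsFiniteMeasure P]
    {f g : Ω → ℝ} (hf : Integrable f P) (hg : Integrable g P)
    {s : Set Ω} (heq : ∀ x ∈ s, f x = g x) :
    ∫ x in s, f x ∂P = ∫ x in s, g x ∂P := by
  have hk : Integrable (fun x => f x - g x) P := hf.sub hg
  obtain ⟨k', hk'm, hk'ae⟩ := hk.aestronglyMeasurable
  have hres : (fun x => f x - g x) =ᵐ[P.restrict s] k' :=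
    Filter.EventuallyEq.filter_mono hk'ae (ae_mono Measure.restrict_le_self)
  have h1 : ∫ x in s, (f x - g x) ∂P = ∫ x in s, k' x ∂P := integral_congr_ae hres
  have hzero : ∫ x in s, k' x ∂P = 0 := by
    rw [← Measure.restrict_toMeasurable (measure_ne_top P s)]
    have hmeas : MeasurableSet {x | k' x ≠ 0} :=
      (hk'm.measurable (measurableSet_singleton 0)).compl
    have hnull : P (toMeasurable P s ∩ {x | k' x ≠ 0}) = 0 := by
      rw [Measure.measure_toMeasurable_inter hmeas (measure_ne_top P s)]
      have hsub : s ∩ {x | k' x ≠ 0} ⊆ {x | ¬ (f x - g x = k' x)} := by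
        intro x hx
        obtain ⟨hxs, hxk⟩ := hx
        simp only [Set.mem_setOf_eq] at hxk ⊢
        intro hcontra
        exact hxk (by rw [← hcontra, heq x hxs, sub_self])
      have := hk'ae
      rw [Filter.EventuallyEq, ae_iff] at this
      exact le_antisymm (le_trans (measure_mono hsub) (le_of_eq this)) zero_le
    have : k' =ᵐ[P.restrict (toMeasurable P s)] 0 := by
      rw [Filter.EventuallyEq, ae_iff]
      have hrw : (P.restrict (toMeasurable P s)) {x | ¬ k' x = (0 : Ω → ℝ) x}
          = P ({x | k' x ≠ 0} ∩ toMeasurable P s) := Measure.restrict_apply hmeas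
      rw [hrw, Set.inter_comm]
      exact hnull
    rw [integral_congr_ae this]
    simp
  have h2 : ∫ x in s, (f x - g x) ∂P = ∫ x in s, f x ∂P - ∫ x in s, g x ∂P :=
    integral_sub hf.restrict hg.restrict
  have := h1.symm.trans h2
  linarith [hzero, this]

/-- Identification of the total effect using far-away (unexposed) control units. -/
theorem total_effect_identification
    {Ω : Type*} [MeasurableSpace Ω] (P : Measure Ω) [IsProbabilityMeasure P]
    {H : Type*} [Zero H]
    (D : Ω → Fin 2) (h : Ω → H) (S : Ω → Fin 2)
    (Y : Fin 2 → Fin 2 → H → Ω → ℝ)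
    (hSmeas : Measurable S)
    -- spillovers are local: unexposed outside the spillover region
    (hLocal : ∀ ω, S ω = 0 → h ω = 0)
    (hD1 : 0 < P {ω | D ω = 1}) (hD0 : 0 < P {ω | D ω = 0})
    (hD0S0 : 0 < P {ω | D ω = 0 ∧ S ω = 0})
    -- integrability of all random variables appearing in the stated expectations
    (hIntArm : ∀ (t d : Fin 2) (e : H), Integrable (Y t d e) P)
    (hIntObs : ∀ t : Fin 2, Integrable (fun ω => Y t (D ω) (h ω) ω) P)
    (hIntExp : ∀ d : Fin 2, Integrable (fun ω => Y 1 d (h ω) ω) P)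
    -- No Anticipation
    (hNoAnt : ∀ (d : Fin 2) (e : H) (ω : Ω), Y 0 d e ω = Y 0 0 0 ω)
    -- Cell Parallel Trends
    (hPT : ∀ d s : Fin 2, 0 < P {ω | D ω = d ∧ S ω = s} →
        condMean P {ω | D ω = d ∧ S ω = s} (fun ω => Y 1 0 0 ω - Y 0 0 0 ω)
        = ∫ ω, (Y 1 0 0 ω - Y 0 0 0 ω) ∂P) :
    condMean P {ω | D ω = 1} (fun ω => Y 1 (D ω) (h ω) ω - Y 0 (D ω) (h ω) ω)
      - condMean P {ω | D ω = 0 ∧ S ω = 0}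
          (fun ω => Y 1 (D ω) (h ω) ω - Y 0 (D ω) (h ω) ω)
    = condMean P {ω | D ω = 1} (fun ω => Y 1 1 (h ω) ω - Y 1 0 0 ω) := by
  classical
  have hIntObsD : Integrable (fun ω => Y 1 (D ω) (h ω) ω - Y 0 (D ω) (h ω) ω) P :=
    (hIntObs 1).sub (hIntObs 0)
  have hIntTr : Integrable (fun ω => Y 1 0 0 ω - Y 0 0 0 ω) P :=
    (hIntArm 1 0 0).sub (hIntArm 0 0 0)
  have hIntTg : Integrable (fun ω => Y 1 1 (h ω) ω - Y 1 0 0 ω) P :=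
    (hIntExp 1).sub (hIntArm 1 0 0)
  set trI : ℝ := ∫ ω, (Y 1 0 0 ω - Y 0 0 0 ω) ∂P with htrI
  -- the control-cell conditional mean identifies the common trend
  have hB : condMean P {ω | D ω = 0 ∧ S ω = 0}
      (fun ω => Y 1 (D ω) (h ω) ω - Y 0 (D ω) (h ω) ω) = trI := by
    have hcong : ∫ ω in {ω | D ω = 0 ∧ S ω = 0},
        (Y 1 (D ω) (h ω) ω - Y 0 (D ω) (h ω) ω) ∂P
        = ∫ ω in {ω | D ω = 0 ∧ S ω = 0}, (Y 1 0 0 ω - Y 0 0 0 ω) ∂P := by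
      refine setIntegral_congr_on' hIntObsD hIntTr ?_
      rintro ω ⟨hDω, hSω⟩
      rw [hDω, hLocal ω hSω]
    have hpt := hPT 0 0 hD0S0
    unfold condMean at hpt ⊢
    rw [hcong]
    exact hpt
  -- each treated cell's trend integral
  have hcell : ∀ s' : Fin 2, ∫ ω in {ω | D ω = 1 ∧ S ω = s'}, (Y 1 0 0 ω - Y 0 0 0 ω) ∂P
      = (P {ω | D ω = 1 ∧ S ω = s'}).toReal * trI := by
    intro s'
    rcases (zero_le : 0 ≤ P {ω | D ω = 1 ∧ S ω = s'}).eq_or_lt with hz | hpos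
    · have h0 : P {ω | D ω = 1 ∧ S ω = s'} = 0 := hz.symm
      rw [Measure.restrict_eq_zero.mpr h0, h0]
      simp
    · have hpt := hPT 1 s' hpos
      unfold condMean at hpt
      have hne : (P {ω | D ω = 1 ∧ S ω = s'}).toReal ≠ 0 :=
        (ENNReal.toReal_pos hpos.ne' (measure_ne_top P _)).ne'
      rw [← hpt, ← mul_assoc, mul_inv_cancel₀ hne, one_mul]
  have h0meas : MeasurableSet {ω | S ω = 0} := hSmeas (measurableSet_singleton 0)
  have hfin2 : ∀ x : Fin 2, ¬ x = 0 ↔ x = 1 := by decide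
  -- trend integral over the treated group, via splitting into the two cells
  have hAsplit : ∫ ω in {ω | D ω = 1}, (Y 1 0 0 ω - Y 0 0 0 ω) ∂P
      = (P {ω | D ω = 1}).toReal * trI := by
    have hres : Integrable (fun ω => Y 1 0 0 ω - Y 0 0 0 ω)
        (P.restrict {ω | D ω = 1}) := hIntTr.restrict
    have hsplit := integral_add_compl h0meas hres
    have e0 : (P.restrict {ω | D ω = 1}).restrict {ω | S ω = 0}
        = P.restrict {ω | D ω = 1 ∧ S ω = 0} := by
      rw [Measure.restrict_restrict h0meas]
      congr 1
      ext ω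
      simp only [Set.mem_inter_iff, Set.mem_setOf_eq]
      tauto
    have e1 : (P.restrict {ω | D ω = 1}).restrict {ω | S ω = 0}ᶜ
        = P.restrict {ω | D ω = 1 ∧ S ω = 1} := by
      rw [Measure.restrict_restrict h0meas.compl]
      congr 1
      ext ω
      simp only [Set.mem_inter_iff, Set.mem_compl_iff, Set.mem_setOf_eq, hfin2]
      tauto
    have hmeastot : P {ω | D ω = 1}
        = P {ω | D ω = 1 ∧ S ω = 0} + P {ω | D ω = 1 ∧ S ω = 1} := by
      have hd := measure_inter_add_diff {ω | D ω = 1} h0meas (μ := P)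
      have e2 : {ω | D ω = 1} ∩ {ω | S ω = 0} = {ω | D ω = 1 ∧ S ω = 0} := by
        ext ω; simp only [Set.mem_inter_iff, Set.mem_setOf_eq]
      have e3 : {ω | D ω = 1} \ {ω | S ω = 0} = {ω | D ω = 1 ∧ S ω = 1} := by
        ext ω
        simp only [Set.mem_diff, Set.mem_setOf_eq, hfin2]
      rw [e2, e3] at hd
      exact hd.symm
    calc ∫ ω in {ω | D ω = 1}, (Y 1 0 0 ω - Y 0 0 0 ω) ∂P
        = (∫ ω in {ω | S ω = 0}, (Y 1 0 0 ω - Y 0 0 0 ω) ∂(P.restrict {ω | D ω = 1}))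
          + ∫ ω in {ω | S ω = 0}ᶜ, (Y 1 0 0 ω - Y 0 0 0 ω) ∂(P.restrict {ω | D ω = 1}) :=
          hsplit.symm
      _ = (∫ ω in {ω | D ω = 1 ∧ S ω = 0}, (Y 1 0 0 ω - Y 0 0 0 ω) ∂P)
          + ∫ ω in {ω | D ω = 1 ∧ S ω = 1}, (Y 1 0 0 ω - Y 0 0 0 ω) ∂P := by
          rw [e0, e1]
      _ = (P {ω | D ω = 1 ∧ S ω = 0}).toReal * trI
          + (P {ω | D ω = 1 ∧ S ω = 1}).toReal * trI := by
          rw [hcell 0, hcell 1]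
      _ = (P {ω | D ω = 1}).toReal * trI := by
          rw [hmeastot, ENNReal.toReal_add (measure_ne_top P _) (measure_ne_top P _)]
          ring
  -- rewrite the observed difference on the treated group
  have hAcong : ∫ ω in {ω | D ω = 1}, (Y 1 (D ω) (h ω) ω - Y 0 (D ω) (h ω) ω) ∂P
      = ∫ ω in {ω | D ω = 1},
          ((Y 1 1 (h ω) ω - Y 1 0 0 ω) + (Y 1 0 0 ω - Y 0 0 0 ω)) ∂P := by
    refine setIntegral_congr_on' hIntObsD (hIntTg.add hIntTr) ?_
    intro ω hω
    simp only [Set.mem_setOf_eq] at hω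
    rw [hω, hNoAnt 1 (h ω) ω]
    simp only [Pi.add_apply]
    ring
  have hAadd : ∫ ω in {ω | D ω = 1},
      ((Y 1 1 (h ω) ω - Y 1 0 0 ω) + (Y 1 0 0 ω - Y 0 0 0 ω)) ∂P
      = (∫ ω in {ω | D ω = 1}, (Y 1 1 (h ω) ω - Y 1 0 0 ω) ∂P)
        + ∫ ω in {ω | D ω = 1}, (Y 1 0 0 ω - Y 0 0 0 ω) ∂P :=
    integral_add hIntTg.restrict hIntTr.restrict
  have hne : (P {ω | D ω = 1}).toReal ≠ 0 :=
    (ENNReal.toReal_pos hD1.ne' (measure_ne_top P _)).ne'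
  rw [hB]
  unfold condMean
  rw [hAcong, hAadd, hAsplit, mul_add, ← mul_assoc, inv_mul_cancel₀ hne, one_mul]
  ring
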